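/- If B is a symmetric d×d real matrix lying in the closed positive k-cone, i.e. σ_1(B) ≥ 0, …, σ_k(B) ≥ 0, then the (k-1)-st Newton tensor T_{k-1}(B) is positive semidefinite. If moreover σ_1(B) > 0, …, σ_k(B) > 0, then T_{k-1}(B) is positive definite. -/

import Mathlib

open Finset Matrix

variable {d : ℕ}

section NewtonAuxSection
open Polynomial Multiset

namespace NewtonAux

/-! ### Elementary symmetric function basics -/

lemma esymm_zero' (m : Multiset ℝ) : m.esymm 0 = 1 := by
  simp [Multiset.esymm]

lemma esymm_card_lt {m : Multiset ℝ} {k : ℕ} (h : Multiset.card m < k) : m.esymm k = 0 := by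
  simp [Multiset.esymm, Multiset.powersetCard_eq_empty _ h]

lemma esymm_cons (x : ℝ) (m : Multiset ℝ) (k : ℕ) :
    (x ::ₘ m).esymm (k + 1) = m.esymm (k + 1) + x * m.esymm k := by
  rw [Multiset.esymm, Multiset.powersetCard_cons, Multiset.map_add, Multiset.sum_add,
    Multiset.map_map]
  congr 1
  rw [Multiset.esymm, ← Multiset.sum_map_mul_left]
  congr 1
  apply Multiset.map_congr rfl
  intro t _
  simp [Multiset.prod_cons]

lemma esymm_pos {m : Multiset ℝ} (hm : ∀ x ∈ m, 0 < x) {k : ℕ} (hk : k ≤ Multiset.card m) :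
    0 < m.esymm k := by
  rw [Multiset.esymm]
  have hpos : ∀ y ∈ (m.powersetCard k).map Multiset.prod, 0 < y := by
    intro y hy
    obtain ⟨t, ht, rfl⟩ := Multiset.mem_map.mp hy
    exact Multiset.prod_pos fun a ha =>
      hm a (Multiset.mem_of_le (Multiset.mem_powersetCard.mp ht).1 ha)
  have hne : (m.powersetCard k).map Multiset.prod ≠ 0 := by
    intro h
    have := congrArg Multiset.card h
    rw [Multiset.card_map, Multiset.card_powersetCard, Multiset.card_zero] at this
    exact (Nat.choose_pos hk).ne' this
  obtain ⟨a, ha⟩ := Multiset.exists_mem_of_ne_zero hne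
  obtain ⟨s, hs⟩ := Multiset.exists_cons_of_mem ha
  rw [hs, Multiset.sum_cons]
  have h1 : 0 < a := hpos a ha
  have h2 : 0 ≤ s.sum := Multiset.sum_nonneg fun y hy => by
    have : y ∈ (m.powersetCard k).map Multiset.prod := hs ▸ Multiset.mem_cons_of_mem hy
    exact (hpos y this).le
  linarith

/-! ### The polynomial `∏ (X + r)` and its iterated derivatives -/

noncomputable def pP (m : Multiset ℝ) : ℝ[X] :=
  (m.map fun r => X + C r).prod

lemma pP_natDegree (m : Multiset ℝ) : (pP m).natDegree = Multiset.card m := by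
  rw [pP, Polynomial.natDegree_multiset_prod_of_monic _ (by
    intro f hf
    obtain ⟨r, _, rfl⟩ := Multiset.mem_map.mp hf
    exact monic_X_add_C r)]
  rw [Multiset.map_map]
  simp [Function.comp_def, natDegree_X_add_C]

lemma pP_coeff {m : Multiset ℝ} {i : ℕ} (h : i ≤ Multiset.card m) :
    (pP m).coeff i = m.esymm (Multiset.card m - i) :=
  Multiset.prod_X_add_C_coeff m h

lemma pP_roots (m : Multiset ℝ) : (pP m).roots = m.map Neg.neg := by
  have : pP m = ((m.map Neg.neg).map fun a => X - C a).prod := by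
    rw [pP, Multiset.map_map]
    apply congrArg
    apply Multiset.map_congr rfl
    intro r _
    simp [sub_neg_eq_add]
  rw [this, roots_multiset_prod_X_sub_C]

lemma pP_roots_card (m : Multiset ℝ) : (pP m).roots.card = (pP m).natDegree := by
  rw [pP_roots, Multiset.card_map, pP_natDegree]

/-- iterated derivatives of a real-rooted polynomial are real-rooted -/
lemma iter_deriv_real_rooted {p : ℝ[X]} (hp : p.roots.card = p.natDegree) {j : ℕ}
    (hj : j ≤ p.natDegree) :
    (derivative^[j] p).natDegree = p.natDegree - j ∧
      (derivative^[j] p).roots.card = p.natDegree - j := by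
  induction j with
  | zero => simpa using hp
  | succ j ih =>
    obtain ⟨h1, h2⟩ := ih (by omega)
    rw [Function.iterate_succ_apply']
    have hd : (derivative (derivative^[j] p)).natDegree ≤ p.natDegree - (j + 1) := by
      have := Polynomial.natDegree_derivative_le (derivative^[j] p)
      omega
    have hr : p.natDegree - (j + 1) ≤ (derivative (derivative^[j] p)).roots.card := by
      have := Polynomial.card_roots_le_derivative (derivative^[j] p)
      omega
    have hr2 := Polynomial.card_roots' (derivative (derivative^[j] p))
    omega

noncomputable def Np (m : Multiset ℝ) (k : ℕ) : ℝ[X] :=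
  derivative^[Multiset.card m - k] (pP m)

lemma Np_natDegree {m : Multiset ℝ} {k : ℕ} (h : k ≤ Multiset.card m) :
    (Np m k).natDegree = k := by
  have := (iter_deriv_real_rooted (pP_roots_card m)
    (j := Multiset.card m - k) (by rw [pP_natDegree]; omega)).1
  rw [Np, this, pP_natDegree]; omega

lemma Np_roots_card {m : Multiset ℝ} {k : ℕ} (h : k ≤ Multiset.card m) :
    (Np m k).roots.card = k := by
  have := (iter_deriv_real_rooted (pP_roots_card m)
    (j := Multiset.card m - k) (by rw [pP_natDegree]; omega)).2
  rw [Np, this, pP_natDegree]; omega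

lemma Np_coeff {m : Multiset ℝ} {k : ℕ} (hk : k ≤ Multiset.card m) {i : ℕ} (hi : i ≤ k) :
    (Np m k).coeff i =
      ((i + (Multiset.card m - k)).descFactorial (Multiset.card m - k) : ℝ) * m.esymm (k - i) := by
  rw [Np, Polynomial.coeff_iterate_derivative, pP_coeff (by omega), nsmul_eq_mul]
  congr 2
  omega

lemma Np_coeff_zero_of_lt {m : Multiset ℝ} {k : ℕ} (hk : k ≤ Multiset.card m) {i : ℕ}
    (hi : k < i) : (Np m k).coeff i = 0 :=
  Polynomial.coeff_eq_zero_of_natDegree_lt (by rw [Np_natDegree hk]; exact hi)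

lemma pP_map_add (m : Multiset ℝ) (s : ℝ) :
    pP (m.map (· + s)) = (pP m).comp (X + C s) := by
  rw [pP, pP, Polynomial.multiset_prod_comp, Multiset.map_map, Multiset.map_map]
  apply congrArg
  apply Multiset.map_congr rfl
  intro r _
  simp only [Function.comp_apply, add_comp, X_comp, C_comp, C_add]
  ring

lemma Np_eval {m : Multiset ℝ} {k : ℕ} (hk : k ≤ Multiset.card m) (s : ℝ) :
    (Np m k).eval s = ((Nat.factorial (Multiset.card m - k)) : ℝ) * (m.map (· + s)).esymm k := by
  have h1 : Np m k = (Nat.factorial (Multiset.card m - k)) • Polynomial.hasseDeriv (Multiset.card m - k) (pP m) := by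
    rw [Np, ← Polynomial.factorial_smul_hasseDeriv]
    rfl
  have h2 : (m.map (· + s)).esymm k = (pP (m.map (· + s))).coeff (Multiset.card m - k) := by
    rw [pP_coeff (by rw [Multiset.card_map]; omega), Multiset.card_map]
    congr 1
    omega
  rw [h1, h2, pP_map_add, ← Polynomial.taylor_apply, Polynomial.taylor_coeff]
  simp [nsmul_eq_mul]

/-! ### positivity of evaluations -/

lemma descFact_pos {n k : ℕ} (h : k ≤ n) : 0 < n.descFactorial k :=
  Nat.pos_of_ne_zero fun hz => by
    rw [Nat.descFactorial_eq_zero_iff_lt] at hz; omega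

lemma eval_pos_of_coeff_zero {p : ℝ[X]} (hc : ∀ i, 0 ≤ p.coeff i) (h0 : 0 < p.coeff 0)
    {s : ℝ} (hs : 0 ≤ s) : 0 < p.eval s := by
  rw [Polynomial.eval_eq_sum_range]
  refine Finset.sum_pos' (fun i _ => mul_nonneg (hc i) (pow_nonneg hs i)) ⟨0, ?_, ?_⟩
  · exact Finset.mem_range.mpr (Nat.succ_pos _)
  · simpa using h0

lemma eval_pos_of_coeff_pos {p : ℝ[X]} (hc : ∀ i, 0 ≤ p.coeff i) {i₀ : ℕ}
    (h0 : 0 < p.coeff i₀) {s : ℝ} (hs : 0 < s) : 0 < p.eval s := by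
  rw [Polynomial.eval_eq_sum_range]
  refine Finset.sum_pos' (fun i _ => mul_nonneg (hc i) (pow_nonneg hs.le i)) ⟨i₀, ?_, ?_⟩
  · exact Finset.mem_range.mpr (Nat.lt_succ_of_le (Polynomial.le_natDegree_of_ne_zero h0.ne'))
  · exact mul_pos h0 (pow_pos hs i₀)

lemma pos_cancel {c a : ℝ} (hc : 0 < c) (h : 0 < c * a) : 0 < a := by nlinarith

lemma nonneg_cancel {c a : ℝ} (hc : 0 < c) (h : 0 ≤ c * a) : 0 ≤ a := by nlinarith

lemma eq_zero_cancel {c a : ℝ} (hc : 0 < c) (h : c * a = 0) : a = 0 := by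
  rcases mul_eq_zero.mp h with h | h
  · exact absurd h hc.ne'
  · exact h

/-! ### Claim B : a real multiset cannot have `σ_1,…,σ_{K-2} > 0`, `σ_{K-1} = 0`, `σ_K > 0` -/

lemma claimB (ν : Multiset ℝ) (K : ℕ) (hK : 2 ≤ K)
    (hyp : ∀ j, 1 ≤ j → j ≤ K - 2 → 0 < ν.esymm j)
    (h0 : ν.esymm (K - 1) = 0) (hKpos : 0 < ν.esymm K) : False := by
  have hKcard : K ≤ Multiset.card ν := by
    by_contra h
    rw [esymm_card_lt (by omega)] at hKpos
    exact lt_irrefl _ hKpos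
  set h : ℝ[X] := Np ν K with hh
  have hco : ∀ i, 0 ≤ h.coeff i := by
    intro i
    rcases le_or_gt i K with hi | hi
    · rw [Np_coeff hKcard hi]
      refine mul_nonneg (Nat.cast_nonneg _) ?_
      have hcase : K - i = K ∨ K - i = K - 1 ∨ (1 ≤ K - i ∧ K - i ≤ K - 2) ∨ K - i = 0 := by omega
      rcases hcase with hE | hE | ⟨hE1, hE2⟩ | hE
      · rw [hE]; exact hKpos.le
      · rw [hE, h0]
      · exact (hyp _ hE1 hE2).le
      · rw [hE, esymm_zero']; exact zero_le_one
    · rw [Np_coeff_zero_of_lt hKcard hi]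
  have h0pos : 0 < h.coeff 0 := by
    rw [Np_coeff hKcard (Nat.zero_le K)]
    refine mul_pos ?_ (by simpa using hKpos)
    exact_mod_cast descFact_pos (by omega)
  have hroots : ∀ a ∈ h.roots, a < 0 := by
    intro a ha
    by_contra h'
    push_neg at h'
    have h1 : h.eval a = 0 := Polynomial.isRoot_of_mem_roots ha
    have := eval_pos_of_coeff_zero hco h0pos h'
    linarith
  have hcard : h.roots.card = h.natDegree := by
    rw [Np_roots_card hKcard, Np_natDegree hKcard]
  have hfac := Polynomial.C_leadingCoeff_mul_prod_multiset_X_sub_C hcard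
  have hcoeff1 : (h.roots.map fun a => X - C a).prod.coeff 1
      = (h.roots.map Neg.neg).esymm (K - 1) := by
    have hrw : (h.roots.map fun a => X - C a) = ((h.roots.map Neg.neg).map fun a => X + C a) := by
      rw [Multiset.map_map]
      apply Multiset.map_congr rfl
      intro a _
      simp [sub_eq_add_neg]
    rw [hrw]
    have := Multiset.prod_X_add_C_coeff (h.roots.map Neg.neg)
      (k := 1) (by rw [Multiset.card_map, hcard, Np_natDegree hKcard]; omega)
    rw [this, Multiset.card_map, hcard, Np_natDegree hKcard]
  have hpos : 0 < (h.roots.map Neg.neg).esymm (K - 1) := by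
    refine esymm_pos ?_ (by rw [Multiset.card_map, hcard, Np_natDegree hKcard]; omega)
    intro x hx
    obtain ⟨a, ha, rfl⟩ := Multiset.mem_map.mp hx
    exact neg_pos.mpr (hroots a ha)
  have hlc : 0 < h.leadingCoeff := by
    rw [Polynomial.leadingCoeff, Np_natDegree hKcard, Np_coeff hKcard le_rfl]
    simp only [Nat.sub_self, esymm_zero', mul_one]
    exact_mod_cast descFact_pos (by omega)
  have hc1 : h.coeff 1 = 0 := by
    rw [Np_coeff hKcard (by omega : 1 ≤ K)]
    have : K - 1 = K - 1 := rfl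
    rw [h0, mul_zero]
  have : h.coeff 1 = h.leadingCoeff * (h.roots.map Neg.neg).esymm (K - 1) := by
    conv_lhs => rw [← hfac]
    rw [Polynomial.coeff_C_mul, hcoeff1]
  nlinarith

/-- The key positivity lemma: if `σ_1(m),…,σ_K(m) > 0` then all `σ_j(m ∖ x) > 0` for `j < K`. -/
theorem keyA : ∀ K : ℕ, ∀ m : Multiset ℝ, ∀ x ∈ m,
    (∀ j, 1 ≤ j → j ≤ K → 0 < m.esymm j) → ∀ j, j < K → 0 < (m.erase x).esymm j := by
  intro K
  induction K using Nat.strong_induction_on with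
  | _ K ih =>
  intro m x hx hyp j hj
  rcases Nat.eq_zero_or_pos j with rfl | hj1
  · rw [esymm_zero']; exact one_pos
  by_cases hjK : j + 1 < K
  · exact ih (j + 1) hjK m x hx (fun i h1 h2 => hyp i h1 (by omega)) j (by omega)
  -- now K = j + 1, j ≥ 1
  have hK : K = j + 1 := by omega
  subst hK
  have hKn : j + 1 ≤ Multiset.card m := by
    by_contra h
    have := hyp (j + 1) (by omega) le_rfl
    rw [esymm_card_lt (by omega)] at this
    exact lt_irrefl _ this
  set μ := m.erase x with hμ
  have hcardμ : Multiset.card μ = Multiset.card m - 1 := by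
    rw [hμ, Multiset.card_erase_of_mem hx]
    rfl
  have hjμ : j ≤ Multiset.card μ := by omega
  have hprior : ∀ i, i ≤ j - 1 → 0 < μ.esymm i := by
    intro i hi
    rcases Nat.eq_zero_or_pos i with rfl | hi1
    · rw [esymm_zero']; exact one_pos
    · exact ih j (by omega) m x hx (fun l h1 h2 => hyp l h1 (by omega)) i (by omega)
  by_contra hneg
  push_neg at hneg
  set R : ℝ[X] := Np μ j with hR
  -- coefficients of R
  have hcoR : ∀ i, 1 ≤ i → 0 ≤ R.coeff i := by
    intro i hi
    rcases le_or_gt i j with h | h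
    · rw [Np_coeff hjμ h]
      refine mul_nonneg (Nat.cast_nonneg _) (hprior _ (by omega)).le
    · rw [Np_coeff_zero_of_lt hjμ h]
  have hR0 : R.eval 0 ≤ 0 := by
    rw [← Polynomial.coeff_zero_eq_eval_zero, Np_coeff hjμ (Nat.zero_le j), Nat.sub_zero]
    exact mul_nonpos_of_nonneg_of_nonpos (Nat.cast_nonneg _) hneg
  -- R tends to infinity
  have hlcR : 0 < R.leadingCoeff := by
    rw [Polynomial.leadingCoeff, Np_natDegree hjμ, Np_coeff hjμ le_rfl]
    simp only [Nat.sub_self, esymm_zero', mul_one]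
    exact_mod_cast descFact_pos (by omega)
  have hdegR : 0 < R.degree := by
    have h1 : R.natDegree = j := Np_natDegree hjμ
    have h2 : R ≠ 0 := fun h => by simp [h] at hlcR
    rw [Polynomial.degree_eq_natDegree h2, h1]
    exact_mod_cast hj1
  obtain ⟨s₁, hs₁pos, hs₁0⟩ :=
    (((R.tendsto_atTop_of_leadingCoeff_nonneg hdegR hlcR.le).eventually
      (Filter.eventually_gt_atTop 0)).and (Filter.eventually_ge_atTop 0)).exists
  -- IVT
  have hIVT := intermediate_value_Icc hs₁0 (R.continuous.continuousOn (s := Set.Icc 0 s₁))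
  have h0mem : (0 : ℝ) ∈ Set.Icc (R.eval 0) (R.eval s₁) := ⟨hR0, hs₁pos.le⟩
  obtain ⟨s₀, hs₀mem, hs₀⟩ := hIVT h0mem
  have hs₀0 : 0 ≤ s₀ := hs₀mem.1
  set ν := μ.map (· + s₀) with hν
  have hcardν : Multiset.card ν = Multiset.card μ := Multiset.card_map _ _
  -- esymm facts about ν
  have hν1 : ∀ i, 1 ≤ i → i ≤ j - 1 → 0 < ν.esymm i := by
    intro i h1 h2
    have hiμ : i ≤ Multiset.card μ := by omega
    refine pos_cancel (c := ((Nat.factorial (Multiset.card μ - i)) : ℝ))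
      (by exact_mod_cast Nat.factorial_pos _) ?_
    rw [← Np_eval hiμ s₀]
    refine eval_pos_of_coeff_zero ?_ ?_ hs₀0
    · intro l
      rcases le_or_gt l i with h | h
      · rw [Np_coeff hiμ h]
        exact mul_nonneg (Nat.cast_nonneg _) (hprior _ (by omega)).le
      · rw [Np_coeff_zero_of_lt hiμ h]
    · rw [Np_coeff hiμ (Nat.zero_le i), Nat.sub_zero]
      exact mul_pos (by exact_mod_cast descFact_pos (by omega)) (hprior i (by omega))
  have hν0 : ν.esymm j = 0 := by
    refine eq_zero_cancel (c := ((Nat.factorial (Multiset.card μ - j)) : ℝ))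
      (by exact_mod_cast Nat.factorial_pos _) ?_
    rw [← Np_eval hjμ s₀]
    exact hs₀
  have hmcons : m.map (· + s₀) = (x + s₀) ::ₘ ν := by
    conv_lhs => rw [← Multiset.cons_erase hx]
    rw [Multiset.map_cons]
  have hmeK : 0 < (m.map (· + s₀)).esymm (j + 1) := by
    refine pos_cancel (c := ((Nat.factorial (Multiset.card m - (j + 1))) : ℝ))
      (by exact_mod_cast Nat.factorial_pos _) ?_
    rw [← Np_eval hKn s₀]
    refine eval_pos_of_coeff_zero ?_ ?_ hs₀0
    · intro l
      rcases le_or_gt l (j + 1) with h | h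
      · rw [Np_coeff hKn h]
        refine mul_nonneg (Nat.cast_nonneg _) ?_
        rcases Nat.eq_zero_or_pos (j + 1 - l) with hz | hp
        · rw [hz, esymm_zero']; exact zero_le_one
        · exact (hyp _ hp (by omega)).le
      · rw [Np_coeff_zero_of_lt hKn h]
    · rw [Np_coeff hKn (Nat.zero_le _), Nat.sub_zero]
      exact mul_pos (by exact_mod_cast descFact_pos (by omega)) (hyp (j + 1) (by omega) le_rfl)
  have hνK : 0 < ν.esymm (j + 1) := by
    have := esymm_cons (x + s₀) ν j
    rw [← hmcons] at this
    rw [this, hν0, mul_zero, add_zero] at hmeK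
    exact hmeK
  exact claimB ν (j + 1) (by omega) (by simpa using hν1) (by simpa using hν0) hνK

/-- Nonnegative version. -/
theorem keyNonneg (K : ℕ) (hK : 1 ≤ K) (m : Multiset ℝ) (x : ℝ) (hx : x ∈ m)
    (hyp : ∀ j, 1 ≤ j → j ≤ K → 0 ≤ m.esymm j) : 0 ≤ (m.erase x).esymm (K - 1) := by
  rcases Nat.eq_zero_or_pos (K - 1) with h0 | hK2
  · rw [h0, esymm_zero']; exact zero_le_one
  set μ := m.erase x with hμ
  have hxcard : 1 ≤ Multiset.card m := by
    have := Multiset.card_pos_iff_exists_mem.mpr ⟨x, hx⟩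
    omega
  have hcardμ : Multiset.card μ = Multiset.card m - 1 := by
    rw [hμ, Multiset.card_erase_of_mem hx]; rfl
  rcases lt_or_ge (Multiset.card m) K with hbig | hKn
  · rw [esymm_card_lt (by omega)]
  have hKμ : K - 1 ≤ Multiset.card μ := by omega
  set R : ℝ[X] := Np μ (K - 1) with hR
  have hpos : ∀ ε : ℝ, 0 < ε → 0 < R.eval ε := by
    intro ε hε
    -- the shifted multiset has strictly positive symmetric functions
    have hyp' : ∀ j, 1 ≤ j → j ≤ K → 0 < (m.map (· + ε)).esymm j := by
      intro j h1 h2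
      have hjm : j ≤ Multiset.card m := by omega
      refine pos_cancel (c := ((Nat.factorial (Multiset.card m - j)) : ℝ))
        (by exact_mod_cast Nat.factorial_pos _) ?_
      rw [← Np_eval hjm ε]
      refine eval_pos_of_coeff_pos ?_ (i₀ := j) ?_ hε
      · intro l
        rcases le_or_gt l j with h | h
        · rw [Np_coeff hjm h]
          refine mul_nonneg (Nat.cast_nonneg _) ?_
          rcases Nat.eq_zero_or_pos (j - l) with hz | hp
          · rw [hz, esymm_zero']; exact zero_le_one
          · exact hyp _ hp (by omega)
        · rw [Np_coeff_zero_of_lt hjm h]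
      · rw [Np_coeff hjm le_rfl]
        simp only [Nat.sub_self, esymm_zero', mul_one]
        exact_mod_cast descFact_pos (by omega)
    have hmem : x + ε ∈ m.map (· + ε) := Multiset.mem_map_of_mem _ hx
    have hkey := keyA K (m.map (· + ε)) (x + ε) hmem hyp' (K - 1) (by omega)
    have herase : (m.map (· + ε)).erase (x + ε) = μ.map (· + ε) := by
      rw [hμ, ← Multiset.map_erase _ (fun a b => by simp) x m]
    rw [herase] at hkey
    rw [Np_eval hKμ ε]
    exact mul_pos (by exact_mod_cast Nat.factorial_pos _) hkey
  -- take the limit ε → 0⁺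
  have hlim : 0 ≤ R.eval 0 := by
    have ht : Filter.Tendsto (fun s => R.eval s) (nhdsWithin 0 (Set.Ioi 0)) (nhds (R.eval 0)) :=
      (R.continuous.tendsto 0).mono_left nhdsWithin_le_nhds
    refine ge_of_tendsto ht ?_
    filter_upwards [self_mem_nhdsWithin] with s hs
    exact (hpos s hs).le
  rw [← Polynomial.coeff_zero_eq_eval_zero, Np_coeff hKμ (Nat.zero_le _), Nat.sub_zero] at hlim
  exact nonneg_cancel (by exact_mod_cast descFact_pos (by omega)) hlim

lemma telescope {m : Multiset ℝ} {x : ℝ} (hx : x ∈ m) :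
    ∀ K : ℕ, ∑ j ∈ Finset.range (K + 1), (-1 : ℝ) ^ j * m.esymm (K - j) * x ^ j
      = (m.erase x).esymm K := by
  intro K
  induction K with
  | zero => simp [esymm_zero']
  | succ K ih =>
    rw [Finset.sum_range_succ']
    have hshift : ∀ i ∈ Finset.range (K + 1),
        (-1 : ℝ) ^ (i + 1) * m.esymm (K + 1 - (i + 1)) * x ^ (i + 1)
          = (-x) * ((-1 : ℝ) ^ i * m.esymm (K - i) * x ^ i) := by
      intro i _
      have : K + 1 - (i + 1) = K - i := by omega
      rw [this]
      ring
    rw [Finset.sum_congr rfl hshift, ← Finset.mul_sum, ih]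
    have hc := esymm_cons x (m.erase x) K
    rw [Multiset.cons_erase hx] at hc
    simp only [pow_zero, Nat.sub_zero, mul_one, one_mul]
    rw [hc]
    ring

lemma conjPow {d : ℕ} (U A : Matrix (Fin d) (Fin d) ℝ) (hU : star U * U = 1)
    (hU' : U * star U = 1) (p : ℕ) : (U * A * star U) ^ p = U * A ^ p * star U := by
  induction p with
  | zero => simpa using hU'.symm
  | succ p ih =>
    rw [pow_succ, ih, pow_succ]
    have key : ∀ X : Matrix (Fin d) (Fin d) ℝ, star U * (U * X) = X := fun X => by
      rw [← Matrix.mul_assoc, hU, Matrix.one_mul]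
    calc (U * A ^ p * star U) * (U * A * star U)
        = U * (A ^ p * (star U * (U * (A * star U)))) := by
          simp only [Matrix.mul_assoc]
      _ = U * (A ^ p * A) * star U := by rw [key]; simp only [Matrix.mul_assoc]

lemma sum_conj_diag {d : ℕ} (U : Matrix (Fin d) (Fin d) ℝ) (N : ℕ) (c : ℕ → ℝ)
    (w : ℕ → Fin d → ℝ) :
    ∑ j ∈ Finset.range N, c j • (U * diagonal (w j) * star U)
      = U * diagonal (fun i => ∑ j ∈ Finset.range N, c j * w j i) * star U := by
  have h1 : (fun i => ∑ j ∈ Finset.range N, c j * w j i)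
      = ∑ j ∈ Finset.range N, c j • w j := by
    funext i
    rw [Finset.sum_apply]
    simp [smul_eq_mul]
  rw [h1]
  have h2 : diagonal (∑ j ∈ Finset.range N, c j • w j)
      = ∑ j ∈ Finset.range N, diagonal (c j • w j) :=
    map_sum (Matrix.diagonalAddMonoidHom (Fin d) ℝ) _ _
  rw [h2]
  rw [Finset.mul_sum, Finset.sum_mul]
  refine Finset.sum_congr rfl fun j _ => ?_
  rw [Matrix.diagonal_smul, Matrix.mul_smul, Matrix.smul_mul]

lemma posSemidef_conj {d : ℕ} (U : Matrix (Fin d) (Fin d) ℝ) {v : Fin d → ℝ}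
    (hv : ∀ i, 0 ≤ v i) : (U * diagonal v * star U).PosSemidef := by
  rw [Matrix.star_eq_conjTranspose]
  exact (Matrix.PosSemidef.diagonal hv).mul_mul_conjTranspose_same U

lemma posDef_conj {d : ℕ} (U : Matrix (Fin d) (Fin d) ℝ) (hU' : U * star U = 1)
    {v : Fin d → ℝ} (hv : ∀ i, 0 < v i) : (U * diagonal v * star U).PosDef := by
  refine Matrix.PosDef.of_dotProduct_mulVec_pos (posSemidef_conj U fun i => (hv i).le).1 fun x hx => ?_
  set y : Fin d → ℝ := star U *ᵥ x with hy
  have hy0 : y ≠ 0 := by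
    intro h
    apply hx
    have : U *ᵥ y = x := by
      rw [hy, Matrix.mulVec_mulVec, hU', Matrix.one_mulVec]
    rw [← this, h, Matrix.mulVec_zero]
  have hquad : dotProduct (star x) ((U * diagonal v * star U) *ᵥ x)
      = ∑ i, v i * y i ^ 2 := by
    have hsx : star x = x := by
      funext i; simp
    rw [hsx, ← Matrix.mulVec_mulVec, ← Matrix.mulVec_mulVec,
      Matrix.dotProduct_mulVec, ← Matrix.mulVec_transpose]
    have hUT : Uᵀ = star U := by
      rw [Matrix.star_eq_conjTranspose, Matrix.conjTranspose]
      ext i j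
      simp
    rw [hUT, ← hy]
    rw [dotProduct]
    refine Finset.sum_congr rfl fun i _ => ?_
    rw [Matrix.mulVec_diagonal]
    ring
  rw [hquad]
  obtain ⟨i₀, hi₀⟩ := Function.ne_iff.mp hy0
  refine Finset.sum_pos' (fun i _ => mul_nonneg (hv i).le (sq_nonneg _)) ⟨i₀, Finset.mem_univ _, ?_⟩
  have hsq : 0 < y i₀ ^ 2 := by
    have : y i₀ ≠ 0 := hi₀
    positivity
  exact mul_pos (hv i₀) hsq


end NewtonAux

end NewtonAuxSection


/-- `σ_k(B)`: the `k`-th elementary symmetric function of the eigenvalues of a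
symmetric (Hermitian) real matrix `B`. -/
noncomputable def sigmaEig {B : Matrix (Fin d) (Fin d) ℝ} (hB : B.IsHermitian) (k : ℕ) : ℝ :=
  (Finset.univ.val.map hB.eigenvalues).esymm k

/-- The `k`-th Newton tensor `T_k(B) = ∑_{j=0}^k (-1)^j σ_{k-j}(B) B^j`. -/
noncomputable def newtonTensor {B : Matrix (Fin d) (Fin d) ℝ} (hB : B.IsHermitian) (k : ℕ) :
    Matrix (Fin d) (Fin d) ℝ :=
  ∑ j ∈ Finset.range (k + 1), ((-1 : ℝ) ^ j * sigmaEig hB (k - j)) • B ^ j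

lemma sigmaEig_def {B : Matrix (Fin d) (Fin d) ℝ} (hB : B.IsHermitian) (k : ℕ) :
    sigmaEig hB k = (Finset.univ.val.map hB.eigenvalues).esymm k := rfl

open NewtonAux

section Matrices

variable {B : Matrix (Fin d) (Fin d) ℝ} (hB : B.IsHermitian)

lemma spectral' :
    B = (hB.eigenvectorUnitary : Matrix (Fin d) (Fin d) ℝ) * diagonal hB.eigenvalues
      * star (hB.eigenvectorUnitary : Matrix (Fin d) (Fin d) ℝ) := by
  have h := hB.spectral_theorem
  rwa [show (RCLike.ofReal ∘ hB.eigenvalues : Fin d → ℝ) = hB.eigenvalues by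
    funext i; simp [RCLike.ofReal_real_eq_id]] at h

lemma newton_eq (K : ℕ) :
    newtonTensor hB K = (hB.eigenvectorUnitary : Matrix (Fin d) (Fin d) ℝ)
      * diagonal (fun i => ∑ j ∈ Finset.range (K + 1),
          (-1 : ℝ) ^ j * sigmaEig hB (K - j) * hB.eigenvalues i ^ j)
      * star (hB.eigenvectorUnitary : Matrix (Fin d) (Fin d) ℝ) := by
  set U : Matrix (Fin d) (Fin d) ℝ := (hB.eigenvectorUnitary : Matrix (Fin d) (Fin d) ℝ)
    with hUdef
  have hU : star U * U = 1 := mem_unitaryGroup_iff'.mp hB.eigenvectorUnitary.2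
  have hU' : U * star U = 1 := mem_unitaryGroup_iff.mp hB.eigenvectorUnitary.2
  have hBeq : B = U * diagonal hB.eigenvalues * star U := spectral' hB
  have hpow : ∀ j : ℕ, B ^ j = U * diagonal (fun i => hB.eigenvalues i ^ j) * star U := by
    intro j
    calc B ^ j = (U * diagonal hB.eigenvalues * star U) ^ j := by rw [← hBeq]
      _ = U * (diagonal hB.eigenvalues) ^ j * star U := conjPow U _ hU hU' j
      _ = U * diagonal (fun i => hB.eigenvalues i ^ j) * star U := by
          rw [Matrix.diagonal_pow]
          rfl
  rw [newtonTensor]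
  calc ∑ j ∈ Finset.range (K + 1), ((-1 : ℝ) ^ j * sigmaEig hB (K - j)) • B ^ j
      = ∑ j ∈ Finset.range (K + 1), ((-1 : ℝ) ^ j * sigmaEig hB (K - j))
          • (U * diagonal (fun i => hB.eigenvalues i ^ j) * star U) := by
        exact Finset.sum_congr rfl fun j _ => by rw [hpow j]
    _ = _ := by
        rw [sum_conj_diag]

end Matrices

/-- If `B` lies in the closed positive `k`-cone then `T_{k-1}(B)` is positive semidefinite;
if `B` lies in the (open) positive `k`-cone then `T_{k-1}(B)` is positive definite. -/
theorem newtonTensor_posSemidef_posDef {B : Matrix (Fin d) (Fin d) ℝ}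
    (hB : B.IsHermitian) (k : ℕ) (hk : 1 ≤ k) :
    ((∀ j, 1 ≤ j → j ≤ k → 0 ≤ sigmaEig hB j) → (newtonTensor hB (k - 1)).PosSemidef) ∧
    ((∀ j, 1 ≤ j → j ≤ k → 0 < sigmaEig hB j) → (newtonTensor hB (k - 1)).PosDef) := by
  set m : Multiset ℝ := Finset.univ.val.map hB.eigenvalues with hm
  have hmem : ∀ i, hB.eigenvalues i ∈ m := fun i =>
    Multiset.mem_map_of_mem _ (Finset.mem_val.mpr (Finset.mem_univ i))
  have hdiag : ∀ i, (∑ j ∈ Finset.range (k - 1 + 1),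
      (-1 : ℝ) ^ j * sigmaEig hB (k - 1 - j) * hB.eigenvalues i ^ j)
        = (m.erase (hB.eigenvalues i)).esymm (k - 1) := by
    intro i
    have := telescope (hmem i) (k - 1)
    simpa [sigmaEig_def, hm] using this
  have hU' : (hB.eigenvectorUnitary : Matrix (Fin d) (Fin d) ℝ)
      * star (hB.eigenvectorUnitary : Matrix (Fin d) (Fin d) ℝ) = 1 :=
    mem_unitaryGroup_iff.mp hB.eigenvectorUnitary.2
  constructor
  · intro hyp
    rw [newton_eq hB (k - 1)]
    apply posSemidef_conj
    intro i
    rw [hdiag i]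
    exact keyNonneg k hk m (hB.eigenvalues i) (hmem i)
      (fun j h1 h2 => by rw [← sigmaEig_def hB j]; exact hyp j h1 h2)
  · intro hyp
    rw [newton_eq hB (k - 1)]
    apply posDef_conj _ hU'
    intro i
    rw [hdiag i]
    exact keyA k m (hB.eigenvalues i) (hmem i)
      (fun j h1 h2 => by rw [← sigmaEig_def hB j]; exact hyp j h1 h2) (k - 1) (by omega)
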